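/- arXiv:1703.01458 — 4 statements merged into one kernel-verified Lean document; each statement's English description precedes it below -/
import Mathlib

section
/- Let K, L be convex bodies in ℝⁿ with the origin in their interiors and let φ₁, φ₂ : [0,∞) → [0,∞) be continuous, strictly increasing functions with φ₁(1) = 1, φ₁(0) = 0, φ₁(∞) = ∞ (and similarly for φ₂), such that the left derivative (φ₁)'_l(1) exists and is positive. For ε > 0, define f_ε : S^{n-1} → (0,∞) implicitly by φ₁(h_K(u)/f_ε(u)) + ε·φ₂(h_L(u)/f_ε(u)) = 1. Then (φ₁)'_l(1) · lim_{ε→0⁺} (f_ε(u) − h_K(u))/ε = h_K(u) · φ₂(h_L(u)/h_K(u)), and this limit holds uniformly in u ∈ S^{n-1}. -/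
set_option maxHeartbeats 1000000

open MeasureTheory Set Filter
open scoped RealInnerProductSpace

/-- The support function `h_K(u) = sup_{x ∈ K} ⟨x, u⟩` of a set `K ⊆ ℝⁿ`. -/
noncomputable def suppFn (n : ℕ) (K : Set (EuclideanSpace ℝ (Fin n)))
    (u : EuclideanSpace ℝ (Fin n)) : ℝ :=
  sSup ((fun x => (inner ℝ x u : ℝ)) '' K)

lemma suppFn_bounds (n : ℕ) (K : Set (EuclideanSpace ℝ (Fin n)))
    (hK : IsCompact K) (h0 : (0 : EuclideanSpace ℝ (Fin n)) ∈ interior K) :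
    ∃ r R : ℝ, 0 < r ∧ ∀ u : EuclideanSpace ℝ (Fin n), ‖u‖ = 1 →
      r ≤ suppFn n K u ∧ suppFn n K u ≤ R := by
  obtain ⟨R, hR⟩ := hK.isBounded.exists_norm_le
  obtain ⟨r, hr, hball⟩ := Metric.isOpen_iff.mp isOpen_interior 0 h0
  refine ⟨r/2, R, by positivity, fun u hu => ?_⟩
  have hmem : ((r/2) • u : EuclideanSpace ℝ (Fin n)) ∈ K := by
    apply interior_subset
    apply hball
    rw [mem_ball_zero_iff, norm_smul, hu, mul_one, Real.norm_eq_abs,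
      abs_of_pos (by positivity)]
    linarith
  have hbdd : BddAbove ((fun x => (inner ℝ x u : ℝ)) '' K) := by
    refine ⟨R, fun y hy => ?_⟩
    obtain ⟨x, hx, rfl⟩ := hy
    calc (inner ℝ x u : ℝ) ≤ ‖x‖ * ‖u‖ := real_inner_le_norm x u
      _ ≤ R := by rw [hu, mul_one]; exact hR x hx
  constructor
  · have : (r/2 : ℝ) = inner ℝ ((r/2) • u : EuclideanSpace ℝ (Fin n)) u := by
      rw [real_inner_smul_left, real_inner_self_eq_norm_sq, hu]; ring
    rw [this]
    exact le_csSup hbdd ⟨_, hmem, rfl⟩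
  · refine csSup_le ⟨_, ⟨_, hmem, rfl⟩⟩ fun y hy => ?_
    obtain ⟨x, hx, rfl⟩ := hy
    calc (inner ℝ x u : ℝ) ≤ ‖x‖ * ‖u‖ := real_inner_le_norm x u
      _ ≤ R := by rw [hu, mul_one]; exact hR x hx

lemma key_estimate (φ₁ φ₂ : ℝ → ℝ)
    (h1m : StrictMonoOn φ₁ (Ici 0)) (h11 : φ₁ 1 = 1)
    (h2c : ContinuousOn φ₂ (Ici 0)) (h2m : StrictMonoOn φ₂ (Ici 0)) (h20 : φ₂ 0 = 0)
    (d : ℝ) (hd : 0 < d) (hderiv : HasDerivWithinAt φ₁ d (Iic 1) 1)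
    (aK AK aL AL : ℝ) (haK : 0 < aK) (hAK : 0 < AK) (haL : 0 < aL) (hAL : 0 < AL)
    (δ : ℝ) (hδ : 0 < δ) :
    ∃ ε₀ > 0, ∀ ε : ℝ, 0 < ε → ε < ε₀ → ∀ a b F : ℝ,
      aK ≤ a → a ≤ AK → aL ≤ b → b ≤ AL → 0 < F →
      φ₁ (a/F) + ε * φ₂ (b/F) = 1 →
      |d * ((F - a)/ε) - a * φ₂ (b/a)| < δ := by
  set M : ℝ := AL / aK with hM
  have hM0 : 0 < M := by positivity
  set C : ℝ := φ₂ M with hCdef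
  have hC : 0 < C := by
    have := h2m (le_refl (0:ℝ)) (le_of_lt hM0) hM0
    rwa [h20] at this
  -- uniform continuity of φ₂ on [0, M]
  have hUC : UniformContinuousOn φ₂ (Icc 0 M) :=
    (isCompact_Icc).uniformContinuousOn_of_continuous (h2c.mono (Icc_subset_Ici_self))
  set δ₃ : ℝ := δ / (6 * (AK + 1)) with hδ₃def
  have hδ₃ : 0 < δ₃ := by positivity
  obtain ⟨ρ, hρ0, hρ⟩ := (Metric.uniformContinuousOn_iff).mp hUC δ₃ hδ₃
  -- derivative modulus
  set δ' : ℝ := min (d/2) (d*δ/(12*(AK+1)*(C+1))) with hδ'def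
  have hδ'0 : 0 < δ' := lt_min (by positivity) (by positivity)
  have hδ'1 : δ' ≤ d/2 := min_le_left _ _
  have hδ'2 : δ' ≤ d*δ/(12*(AK+1)*(C+1)) := min_le_right _ _
  have hslope := (hasDerivWithinAt_iff_tendsto_slope).mp hderiv
  rw [Metric.tendsto_nhdsWithin_nhds] at hslope
  obtain ⟨η₁, hη₁0, hη₁⟩ := hslope δ' hδ'0
  set η : ℝ := min η₁ (min (1/2) (min (δ/(6*(AK+1)*(C+1))) (ρ*aK^2/(2*(AL+1)*(AK+1))))) with hηdef
  have hη0 : 0 < η := by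
    refine lt_min hη₁0 (lt_min (by norm_num) (lt_min (by positivity) (by positivity)))
  have hη2 : η ≤ 1/2 := le_trans (min_le_right _ _) (min_le_left _ _)
  have hη3 : η ≤ δ/(6*(AK+1)*(C+1)) :=
    le_trans (min_le_right _ _) (le_trans (min_le_right _ _) (min_le_left _ _))
  have hη4 : η ≤ ρ*aK^2/(2*(AL+1)*(AK+1)) :=
    le_trans (min_le_right _ _) (le_trans (min_le_right _ _) (min_le_right _ _))
  have hη1' : η ≤ η₁ := min_le_left _ _
  -- φ₁ (1 - η) < 1
  have h1η_mem : (1 - η : ℝ) ∈ Ici (0:ℝ) := by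
    rw [mem_Ici]; linarith
  have hφ1η : φ₁ (1 - η) < 1 := by
    have := h1m h1η_mem (mem_Ici.mpr (by norm_num : (0:ℝ) ≤ 1)) (by linarith)
    rwa [h11] at this
  refine ⟨(1 - φ₁ (1 - η)) / C, div_pos (by linarith) hC, ?_⟩
  intro ε hε hεε₀ a b F ha1 ha2 hb1 hb2 hF heq
  have ha0 : 0 < a := lt_of_lt_of_le haK ha1
  have hb0 : 0 < b := lt_of_lt_of_le haL hb1
  set t : ℝ := a / F with htdef
  have ht0 : 0 < t := by positivity
  have hbF0 : 0 < b / F := by positivity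
  have hφ2pos : 0 < φ₂ (b/F) := by
    have := h2m (le_refl (0:ℝ)) (le_of_lt hbF0) hbF0
    rwa [h20] at this
  have ht1 : t < 1 := by
    have hlt : φ₁ t < φ₁ 1 := by
      rw [h11]
      have := mul_pos hε hφ2pos
      linarith
    exact (h1m.lt_iff_lt (le_of_lt ht0) (by norm_num)).mp hlt
  have haF : a < F := (div_lt_one hF).mp ht1
  -- upper bound on φ₂ (b/F)
  have hbFM : b / F ≤ M := by
    rw [hM]
    exact div_le_div₀ (le_of_lt hAL) hb2 haK (le_trans ha1 (le_of_lt haF))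
  have hφ2le : φ₂ (b/F) ≤ C :=
    h2m.monotoneOn (le_of_lt hbF0) (le_of_lt hM0) hbFM
  -- t > 1 - η
  have htη : 1 - η < t := by
    have h1 : 1 - φ₁ t = ε * φ₂ (b/F) := by linarith
    have h2 : ε * φ₂ (b/F) < ((1 - φ₁ (1 - η)) / C) * C := by
      calc ε * φ₂ (b/F) ≤ ε * C := mul_le_mul_of_nonneg_left hφ2le (le_of_lt hε)
        _ < ((1 - φ₁ (1 - η)) / C) * C := mul_lt_mul_of_pos_right hεε₀ hC
    rw [div_mul_cancel₀ _ (ne_of_gt hC)] at h2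
    have hφlt : φ₁ (1 - η) < φ₁ t := by linarith
    exact (h1m.lt_iff_lt h1η_mem (le_of_lt ht0)).mp hφlt
  -- F bounds
  have hFt : F * t = a := by rw [htdef]; field_simp
  have hFt' : F * (1 - t) = F - a := by rw [mul_sub, mul_one, hFt]
  have hF2AK : F < 2 * AK := by
    have e1 : F * (1/2) ≤ F * (1 - η) := mul_le_mul_of_nonneg_left (by linarith) (le_of_lt hF)
    have e2 : F * (1 - η) < F * t := mul_lt_mul_of_pos_left htη hF
    linarith
  have hFa : F - a ≤ 2 * AK * η := by
    have e3 : F * (1 - t) ≤ F * η := mul_le_mul_of_nonneg_left (by linarith) (le_of_lt hF)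
    have e4 : F * η ≤ (2 * AK) * η := mul_le_mul_of_nonneg_right (le_of_lt hF2AK) (le_of_lt hη0)
    linarith
  -- slope estimate
  have hm1 : |(1 - φ₁ t)/(1 - t) - d| < δ' := by
    have hmem : t ∈ Iic (1:ℝ) \ {1} := ⟨le_of_lt ht1, by simp [ne_of_lt ht1]⟩
    have hdist : dist t 1 < η₁ := by
      rw [Real.dist_eq, abs_of_neg (by linarith : t - 1 < 0)]
      linarith
    have := hη₁ hmem hdist
    rw [Real.dist_eq] at this
    have hsl : slope φ₁ 1 t = (1 - φ₁ t)/(1 - t) := by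
      rw [slope_def_field, h11]
      rw [div_eq_div_iff (by linarith) (by linarith)]
      ring
    rwa [hsl] at this
  set m : ℝ := (1 - φ₁ t)/(1 - t) with hmdef
  have hm2 : d/2 < m := by
    have := abs_lt.mp hm1
    linarith [this.1]
  have hm0 : 0 < m := by linarith
  -- key identity
  have h1tne : (1:ℝ) - t ≠ 0 := ne_of_gt (by linarith)
  have hφ1t : 1 - φ₁ t = m * (1 - t) := (div_mul_cancel₀ _ h1tne).symm
  have hεeq : ε * φ₂ (b/F) = m * (1 - t) := by linarith
  have hX : d * ((F - a)/ε) = (d/m) * (F * φ₂ (b/F)) := by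
    have hεval : ε = m * (1 - t) / φ₂ (b/F) := by
      rw [eq_div_iff (ne_of_gt hφ2pos)]
      exact hεeq
    rw [← hFt', hεval, div_div_eq_mul_div,
      show F * (1 - t) * φ₂ (b/F) = (1 - t) * (F * φ₂ (b/F)) by ring,
      show m * (1 - t) = (1 - t) * m by ring,
      mul_div_mul_left _ _ h1tne]
    ring
  -- estimate term 1
  have hE1 : |d/m - 1| * (F * φ₂ (b/F)) ≤ δ/3 := by
    have h1 : |d/m - 1| = |d - m| / m := by
      rw [show d/m - 1 = (d - m)/m by field_simp, abs_div, abs_of_pos hm0]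
    have h2 : |d - m| ≤ δ' := by
      rw [abs_sub_comm]; exact le_of_lt hm1
    have h3 : |d/m - 1| ≤ 2 * δ' / d := by
      rw [h1]
      calc |d - m| / m ≤ δ' / (d/2) :=
            div_le_div₀ (le_of_lt hδ'0) h2 (by positivity) (le_of_lt hm2)
        _ = 2 * δ' / d := by rw [div_div_eq_mul_div]; ring_nf
    have h4 : F * φ₂ (b/F) ≤ (2*AK) * C :=
      mul_le_mul (le_of_lt hF2AK) hφ2le (le_of_lt hφ2pos) (by positivity)
    have hkey : 12*AK*C*δ' ≤ d*δ := by
      have e : 12*AK*C ≤ 12*(AK+1)*(C+1) := by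
        have : 12*(AK+1)*(C+1) = 12*AK*C + 12*AK + 12*C + 12 := by ring
        linarith
      have e2 : 12*AK*C*δ' ≤ 12*(AK+1)*(C+1)*δ' := mul_le_mul_of_nonneg_right e (le_of_lt hδ'0)
      have e3 : δ' * (12*(AK+1)*(C+1)) ≤ d*δ := by
        rw [← le_div_iff₀ (by positivity)]
        exact hδ'2
      linarith
    calc |d/m - 1| * (F * φ₂ (b/F)) ≤ (2 * δ' / d) * ((2*AK) * C) :=
          mul_le_mul h3 h4 (by positivity) (by positivity)
      _ ≤ δ/3 := by
          rw [div_mul_eq_mul_div, div_le_div_iff₀ hd (by norm_num : (0:ℝ) < 3)]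
          ring_nf
          ring_nf at hkey
          linarith
  -- estimate term 2
  have hE2 : (F - a) * φ₂ (b/F) ≤ δ/3 := by
    have h4 : (F - a) * φ₂ (b/F) ≤ (2*AK*η) * C :=
      mul_le_mul hFa hφ2le (le_of_lt hφ2pos) (by positivity)
    have hkey : 6*(AK+1)*(C+1) * η ≤ δ := by
      have := (le_div_iff₀ (by positivity : (0:ℝ) < 6*(AK+1)*(C+1))).mp hη3
      linarith
    have e : 2*AK*C ≤ 6*(AK+1)*(C+1)/3 := by
      have : 6*(AK+1)*(C+1) = 6*AK*C + 6*AK + 6*C + 6 := by ring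
      rw [this]
      linarith
    have e2 : (2*AK*η)*C = (2*AK*C)*η := by ring
    have e3 : (2*AK*C)*η ≤ (6*(AK+1)*(C+1)/3)*η := mul_le_mul_of_nonneg_right e (le_of_lt hη0)
    have e4 : (6*(AK+1)*(C+1)/3)*η = (6*(AK+1)*(C+1)*η)/3 := by ring
    linarith
  -- estimate term 3
  have hbaM : b / a ≤ M := by
    rw [hM]; exact div_le_div₀ (le_of_lt hAL) hb2 haK ha1
  have hba0 : 0 < b / a := by positivity
  have hbFba : b / F ≤ b / a :=
    div_le_div_of_nonneg_left (le_of_lt hb0) ha0 (le_of_lt haF)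
  have hdiff : b/a - b/F = b*(F-a)/(a*F) := by
    field_simp
  have hdiffρ : b/a - b/F < ρ := by
    rw [hdiff]
    have h6 : b*(F-a)/(a*F) ≤ AL*(2*AK*η)/(aK*aK) := by
      apply div_le_div₀ (by positivity) ?_ (by positivity) ?_
      · exact mul_le_mul hb2 hFa (by linarith) (le_of_lt hAL)
      · exact mul_le_mul ha1 (le_trans ha1 (le_of_lt haF)) (le_of_lt haK) (le_of_lt ha0)
    have h7 : AL*(2*AK*η)/(aK*aK) < ρ := by
      rw [div_lt_iff₀ (by positivity)]
      have e : 2*(AL+1)*(AK+1)*η ≤ ρ*aK^2 := by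
        have := (le_div_iff₀ (by positivity : (0:ℝ) < 2*(AL+1)*(AK+1))).mp hη4
        linarith
      have e1 : AL*(2*AK*η) < 2*(AL+1)*(AK+1)*η := by
        have c1 : AL*(2*AK) < 2*(AL+1)*(AK+1) := by
          have : 2*(AL+1)*(AK+1) = 2*AL*AK + 2*AL + 2*AK + 2 := by ring
          have h' : AL*(2*AK) = 2*AL*AK := by ring
          linarith
        calc AL*(2*AK*η) = (AL*(2*AK))*η := by ring
          _ < (2*(AL+1)*(AK+1))*η := mul_lt_mul_of_pos_right c1 hη0
      have e2 : ρ*aK^2 = ρ*(aK*aK) := by ring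
      linarith
    linarith
  have hE3 : a * |φ₂ (b/F) - φ₂ (b/a)| ≤ δ/6 := by
    have hmem1 : b/F ∈ Icc (0:ℝ) M := ⟨le_of_lt hbF0, hbFM⟩
    have hmem2 : b/a ∈ Icc (0:ℝ) M := ⟨le_of_lt hba0, hbaM⟩
    have hdd : dist (b/F) (b/a) < ρ := by
      rw [Real.dist_eq, abs_of_nonpos (by linarith)]
      linarith
    have hcont := hρ _ hmem1 _ hmem2 hdd
    rw [Real.dist_eq] at hcont
    calc a * |φ₂ (b/F) - φ₂ (b/a)| ≤ AK * δ₃ :=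
          mul_le_mul ha2 (le_of_lt hcont) (abs_nonneg _) (le_of_lt hAK)
      _ ≤ δ/6 := by
          rw [hδ₃def, ← mul_div_assoc, div_le_div_iff₀ (by positivity) (by norm_num : (0:ℝ) < 6)]
          have : δ*(6*(AK+1)) = AK*δ*6 + 6*δ := by ring
          linarith
  -- combine
  have hsplit : d * ((F - a)/ε) - a * φ₂ (b/a) =
      (d/m - 1) * (F * φ₂ (b/F)) + ((F - a) * φ₂ (b/F) + a * (φ₂ (b/F) - φ₂ (b/a))) := by
    rw [hX]; ring
  rw [hsplit]
  calc |(d/m - 1) * (F * φ₂ (b/F)) + ((F - a) * φ₂ (b/F) + a * (φ₂ (b/F) - φ₂ (b/a)))|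
      ≤ |(d/m - 1) * (F * φ₂ (b/F))| + |(F - a) * φ₂ (b/F)| + |a * (φ₂ (b/F) - φ₂ (b/a))| := by
        refine (abs_add_le _ _).trans ?_
        rw [add_assoc]
        gcongr
        exact abs_add_le _ _
    _ = |d/m - 1| * (F * φ₂ (b/F)) + (F - a) * φ₂ (b/F) + a * |φ₂ (b/F) - φ₂ (b/a)| := by
        simp only [abs_mul]
        rw [abs_of_pos hF, abs_of_pos hφ2pos,
          abs_of_nonneg (show (0:ℝ) ≤ F - a by linarith), abs_of_pos ha0]
    _ ≤ δ/3 + δ/3 + δ/6 := by gcongr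
    _ < δ := by linarith

/-- for convex bodies `K, L` with `0` in their interiors and Orlicz functions
`φ₁, φ₂ ∈ 𝓘` with positive left derivative `(φ₁)'_l(1) = d`, the functions `f_ε` defined by
`φ₁(h_K/f_ε) + ε φ₂(h_L/f_ε) = 1` satisfy
`(φ₁)'_l(1) · (f_ε − h_K)/ε → h_K · φ₂(h_L/h_K)` uniformly on `S^{n-1}` as `ε → 0⁺`. -/
theorem orlicz_linear_addition_variational (n : ℕ)
    (K L : Set (EuclideanSpace ℝ (Fin n)))
    (hKconv : Convex ℝ K) (hKcomp : IsCompact K)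
    (h0K : (0 : EuclideanSpace ℝ (Fin n)) ∈ interior K)
    (hLconv : Convex ℝ L) (hLcomp : IsCompact L)
    (h0L : (0 : EuclideanSpace ℝ (Fin n)) ∈ interior L)
    (φ₁ φ₂ : ℝ → ℝ)
    (h1c : ContinuousOn φ₁ (Ici 0)) (h1m : StrictMonoOn φ₁ (Ici 0))
    (h10 : φ₁ 0 = 0) (h11 : φ₁ 1 = 1) (h1t : Tendsto φ₁ atTop atTop)
    (h2c : ContinuousOn φ₂ (Ici 0)) (h2m : StrictMonoOn φ₂ (Ici 0))
    (h20 : φ₂ 0 = 0) (h21 : φ₂ 1 = 1) (h2t : Tendsto φ₂ atTop atTop)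
    (d : ℝ) (hd : 0 < d) (hderiv : HasDerivWithinAt φ₁ d (Iic 1) 1)
    (f : ℝ → Metric.sphere (0 : EuclideanSpace ℝ (Fin n)) 1 → ℝ)
    (hfpos : ∀ ε > 0, ∀ u, 0 < f ε u)
    (hfdef : ∀ ε > 0, ∀ u : Metric.sphere (0 : EuclideanSpace ℝ (Fin n)) 1,
      φ₁ (suppFn n K ↑u / f ε u) + ε * φ₂ (suppFn n L ↑u / f ε u) = 1) :
    TendstoUniformly (fun ε u => d * ((f ε u - suppFn n K ↑u) / ε))
      (fun u => suppFn n K ↑u * φ₂ (suppFn n L ↑u / suppFn n K ↑u))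
      (nhdsWithin 0 (Ioi 0)) := by
  obtain ⟨aK, AK, haK, hKb⟩ := suppFn_bounds n K hKcomp h0K
  obtain ⟨aL, AL, haL, hLb⟩ := suppFn_bounds n L hLcomp h0L
  rw [Metric.tendstoUniformly_iff]
  intro δ hδ
  obtain ⟨ε₀, hε₀, hkey⟩ := key_estimate φ₁ φ₂ h1m h11 h2c h2m h20 d hd hderiv
    aK (max AK aK) aL (max AL aL) haK (lt_max_of_lt_right haK) haL (lt_max_of_lt_right haL)
    δ hδ
  filter_upwards [Ioo_mem_nhdsGT_of_mem (Set.mem_Ico.mpr ⟨le_refl (0:ℝ), hε₀⟩)] with ε hε u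
  have hu : ‖(u : EuclideanSpace ℝ (Fin n))‖ = 1 := by
    have := u.2
    rwa [mem_sphere_zero_iff_norm] at this
  obtain ⟨hK1, hK2⟩ := hKb u hu
  obtain ⟨hL1, hL2⟩ := hLb u hu
  rw [Real.dist_eq, abs_sub_comm]
  exact hkey ε hε.1 hε.2 _ _ _ hK1 (le_trans hK2 (le_max_left _ _)) hL1
    (le_trans hL2 (le_max_left _ _)) (hfpos ε hε.1 u) (hfdef ε hε.1 u)
end

section
/- Let Ω, Ω₁ be bounded convex domains in ℝⁿ containing the origin, 1 < p < n, and φ : [0,∞) → [0,∞) increasing and convex. Then the Orlicz L_φ mixed p-capacity satisfies C_{p,φ}(Ω, Ω₁) ≥ C_p(Ω) · φ((C_p(Ω₁)/C_p(Ω))^{1/(n-p)}). -/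
open MeasureTheory Set

/-- A bounded open convex domain containing the origin. -/
def IsConvexDomain (n : ℕ) (Ω : Set (EuclideanSpace ℝ (Fin n))) : Prop :=
  IsOpen Ω ∧ Convex ℝ Ω ∧ Bornology.IsBounded Ω ∧ (0 : EuclideanSpace ℝ (Fin n)) ∈ Ω

/-- A supporting line with nonnegative slope for an increasing convex function. -/
lemma exists_support_line (φ : ℝ → ℝ) (hφm : MonotoneOn φ (Ici 0))
    (hφc : ConvexOn ℝ (Ici 0) φ) (a : ℝ) (ha : 0 < a) :
    ∃ s : ℝ, 0 ≤ s ∧ ∀ x : ℝ, 0 < x → φ a + s * (x - a) ≤ φ x := by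
  set S : Set ℝ := (fun y => (φ y - φ a) / (y - a)) '' Ioi a with hS
  have hne : S.Nonempty := ⟨_, mem_image_of_mem _ (by simp [ha] : (a + 1 : ℝ) ∈ Ioi a)⟩
  have hlb : ∀ z ∈ S, (0 : ℝ) ≤ z := by
    rintro z ⟨y, hy, rfl⟩
    have hay : a < y := hy
    have h1 : φ a ≤ φ y := hφm (le_of_lt ha) (le_of_lt (ha.trans hay)) hay.le
    exact div_nonneg (by linarith) (by linarith)
  have hbdd : BddBelow S := ⟨0, hlb⟩
  refine ⟨sInf S, le_csInf hne hlb, ?_⟩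
  intro x hx
  rcases lt_trichotomy x a with hxa | rfl | hax
  · -- x < a : need sInf S ≥ slope x a
    have hslope : (φ a - φ x) / (a - x) ≤ sInf S := by
      apply le_csInf hne
      rintro z ⟨y, hy, rfl⟩
      have hay : a < y := hy
      have := hφc.slope_mono_adjacent (hx.le : x ∈ Ici 0)
        (le_of_lt (ha.trans hay) : y ∈ Ici 0) hxa hay
      exact this
    have hax' : (0 : ℝ) < a - x := by linarith
    rw [div_le_iff₀ hax'] at hslope
    nlinarith
  · simp
  · -- a < x : sInf S ≤ slope a x
    have hslope : sInf S ≤ (φ x - φ a) / (x - a) := csInf_le hbdd (mem_image_of_mem _ hax)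
    have hax' : (0 : ℝ) < x - a := by linarith
    rw [le_div_iff₀ hax'] at hslope
    nlinarith

lemma suppFn_nonneg {n : ℕ} {Ω : Set (EuclideanSpace ℝ (Fin n))} (h : IsConvexDomain n Ω)
    (u : EuclideanSpace ℝ (Fin n)) : 0 ≤ suppFn n Ω u := by
  obtain ⟨ho, hc, hb, h0⟩ := h
  obtain ⟨R, hR⟩ := hb.exists_norm_le
  have hbdd : BddAbove ((fun x => (inner ℝ x u : ℝ)) '' Ω) := by
    refine ⟨R * ‖u‖, ?_⟩
    rintro z ⟨x, hx, rfl⟩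
    calc (inner ℝ x u : ℝ) ≤ ‖x‖ * ‖u‖ := real_inner_le_norm x u
      _ ≤ R * ‖u‖ := by
          have := hR x hx
          have : ‖x‖ * ‖u‖ ≤ R * ‖u‖ := mul_le_mul_of_nonneg_right this (norm_nonneg u)
          exact this
  have : (0 : ℝ) ∈ (fun x => (inner ℝ x u : ℝ)) '' Ω := by
    refine ⟨0, h0, ?_⟩
    simp
  exact le_csSup hbdd this

lemma suppFn_pos {n : ℕ} {Ω : Set (EuclideanSpace ℝ (Fin n))} (h : IsConvexDomain n Ω)
    (u : EuclideanSpace ℝ (Fin n)) (hu : ‖u‖ = 1) : 0 < suppFn n Ω u := by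
  obtain ⟨ho, hc, hb, h0⟩ := h
  obtain ⟨R, hR⟩ := hb.exists_norm_le
  have hbdd : BddAbove ((fun x => (inner ℝ x u : ℝ)) '' Ω) := by
    refine ⟨R * ‖u‖, ?_⟩
    rintro z ⟨x, hx, rfl⟩
    calc (inner ℝ x u : ℝ) ≤ ‖x‖ * ‖u‖ := real_inner_le_norm x u
      _ ≤ R * ‖u‖ := mul_le_mul_of_nonneg_right (hR x hx) (norm_nonneg u)
  obtain ⟨ε, hε, hball⟩ := Metric.isOpen_iff.mp ho 0 h0
  have hmem : (ε / 2) • u ∈ Ω := by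
    apply hball
    simp only [Metric.mem_ball, dist_zero_right, norm_smul, hu, mul_one]
    rw [Real.norm_eq_abs, abs_of_pos (by linarith)]
    linarith
  have hval : (inner ℝ ((ε / 2) • u) u : ℝ) = ε / 2 := by
    rw [real_inner_smul_left, real_inner_self_eq_norm_sq, hu]
    ring
  have : (ε / 2 : ℝ) ≤ suppFn n Ω u := by
    rw [← hval]
    exact le_csSup hbdd (mem_image_of_mem _ hmem)
  linarith

lemma suppFn_continuous {n : ℕ} {Ω : Set (EuclideanSpace ℝ (Fin n))} (h : IsConvexDomain n Ω) :
    Continuous (suppFn n Ω) := by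
  obtain ⟨ho, hc, hb, h0⟩ := h
  obtain ⟨R, hR⟩ := hb.exists_norm_le
  have hR0 : 0 ≤ R := le_trans (norm_nonneg _) (hR 0 h0)
  have hne : Ω.Nonempty := ⟨0, h0⟩
  have hbdd : ∀ u, BddAbove ((fun x => (inner ℝ x u : ℝ)) '' Ω) := by
    intro u
    refine ⟨R * ‖u‖, ?_⟩
    rintro z ⟨x, hx, rfl⟩
    calc (inner ℝ x u : ℝ) ≤ ‖x‖ * ‖u‖ := real_inner_le_norm x u
      _ ≤ R * ‖u‖ := mul_le_mul_of_nonneg_right (hR x hx) (norm_nonneg u)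
  have key : ∀ u v, suppFn n Ω u ≤ suppFn n Ω v + R * ‖u - v‖ := by
    intro u v
    apply csSup_le (hne.image _)
    rintro z ⟨x, hx, rfl⟩
    have h1 : (inner ℝ x u : ℝ) = inner ℝ x v + inner ℝ x (u - v) := by
      rw [← inner_add_right]
      congr 1
      abel
    have h2 : (inner ℝ x v : ℝ) ≤ suppFn n Ω v := le_csSup (hbdd v) (mem_image_of_mem _ hx)
    have h3 : (inner ℝ x (u - v) : ℝ) ≤ R * ‖u - v‖ :=
      le_trans (real_inner_le_norm _ _)
        (mul_le_mul_of_nonneg_right (hR x hx) (norm_nonneg _))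
    linarith
  have hlip : LipschitzWith R.toNNReal (suppFn n Ω) := by
    apply LipschitzWith.of_dist_le_mul
    intro u v
    rw [Real.dist_eq, Real.coe_toNNReal R hR0]
    rw [abs_sub_le_iff]
    constructor
    · have := key u v
      have hd : ‖u - v‖ = dist u v := (dist_eq_norm u v).symm
      rw [hd] at this
      linarith
    · have := key v u
      have hd : ‖v - u‖ = dist u v := by rw [← dist_eq_norm, dist_comm]
      rw [hd] at this
      linarith
  exact hlip.continuous

/-- the `p`-capacitary Orlicz–Minkowski inequality
`C_{p,φ}(Ω,Ω₁) ≥ C_p(Ω) · φ((C_p(Ω₁)/C_p(Ω))^{1/(n-p)})`, where `μp` is the `p`-capacitary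
measure of `Ω`, `Cp = C_p(Ω)` and `Cp1 = C_p(Ω₁)` are linked by the Poincaré `p`-capacity
formula and the `p`-capacitary Minkowski inequality. -/
theorem orlicz_minkowski_capacity (n : ℕ) (p : ℝ) (hp : 1 < p) (hpn : p < n)
    (Ω Ω₁ : Set (EuclideanSpace ℝ (Fin n)))
    (hΩ : IsConvexDomain n Ω) (hΩ₁ : IsConvexDomain n Ω₁)
    (φ : ℝ → ℝ) (hφm : MonotoneOn φ (Ici 0)) (hφc : ConvexOn ℝ (Ici 0) φ)
    (μp : Measure (Metric.sphere (0 : EuclideanSpace ℝ (Fin n)) 1)) [IsFiniteMeasure μp]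
    (Cp Cp1 : ℝ) (hCp : 0 < Cp) (hCp1 : 0 < Cp1)
    (hPoincare : (p - 1) / ((n : ℝ) - p) * ∫ u, suppFn n Ω ↑u ∂μp = Cp)
    (hMinkowski : ((p - 1) / ((n : ℝ) - p) * ∫ u, suppFn n Ω₁ ↑u ∂μp) ^ ((n : ℝ) - p)
      ≥ Cp ^ ((n : ℝ) - p - 1) * Cp1) :
    (p - 1) / ((n : ℝ) - p) * ∫ u, φ (suppFn n Ω₁ ↑u / suppFn n Ω ↑u) * suppFn n Ω ↑u ∂μp
      ≥ Cp * φ ((Cp1 / Cp) ^ (1 / ((n : ℝ) - p))) := by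
  have hd : (0 : ℝ) < (n : ℝ) - p := by linarith
  have hk : (0 : ℝ) < (p - 1) / ((n : ℝ) - p) := div_pos (by linarith) hd
  set k : ℝ := (p - 1) / ((n : ℝ) - p) with hkdef
  set d : ℝ := (n : ℝ) - p with hddef
  set a : ℝ := (Cp1 / Cp) ^ (1 / d) with hadef
  have ha : 0 < a := Real.rpow_pos_of_pos (div_pos hCp1 hCp) _
  -- the functions on the sphere
  set g : Metric.sphere (0 : EuclideanSpace ℝ (Fin n)) 1 → ℝ :=
    fun u => suppFn n Ω ↑u with hgdef
  set f : Metric.sphere (0 : EuclideanSpace ℝ (Fin n)) 1 → ℝ :=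
    fun u => suppFn n Ω₁ ↑u with hfdef
  have hgpos : ∀ u, 0 < g u := fun u => suppFn_pos hΩ _ (mem_sphere_zero_iff_norm.mp u.2)
  have hfpos : ∀ u, 0 < f u := fun u => suppFn_pos hΩ₁ _ (mem_sphere_zero_iff_norm.mp u.2)
  have hgc : Continuous g := (suppFn_continuous hΩ).comp continuous_subtype_val
  have hfc : Continuous f := (suppFn_continuous hΩ₁).comp continuous_subtype_val
  -- continuity of φ on Ioi 0
  have hφcont : ContinuousOn φ (Ioi 0) :=
    (hφc.subset Ioi_subset_Ici_self (convex_Ioi 0)).continuousOn isOpen_Ioi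
  have hhc : Continuous (fun u => φ (f u / g u) * g u) := by
    have h1 : Continuous (fun u => f u / g u) := hfc.div hgc (fun u => (hgpos u).ne')
    have h2 : Continuous (fun u => φ (f u / g u)) :=
      hφcont.comp_continuous h1 (fun u => div_pos (hfpos u) (hgpos u))
    exact h2.mul hgc
  -- integrability
  have hcs : ∀ (F : Metric.sphere (0 : EuclideanSpace ℝ (Fin n)) 1 → ℝ),
      Continuous F → Integrable F μp := by
    intro F hF
    exact hF.integrable_of_hasCompactSupport
      (IsCompact.of_isClosed_subset isCompact_univ (isClosed_tsupport _) (subset_univ _))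
  have hgi : Integrable g μp := hcs g hgc
  have hfi : Integrable f μp := hcs f hfc
  have hhi : Integrable (fun u => φ (f u / g u) * g u) μp := hcs _ hhc
  -- supporting line
  obtain ⟨s, hs0, hsupp⟩ := exists_support_line φ hφm hφc a ha
  -- pointwise bound
  have hpt : ∀ u, φ a * g u + s * (f u - a * g u) ≤ φ (f u / g u) * g u := by
    intro u
    have hx : 0 < f u / g u := div_pos (hfpos u) (hgpos u)
    have := hsupp _ hx
    have h2 := mul_le_mul_of_nonneg_right this (hgpos u).le
    have h3 : f u / g u * g u = f u := div_mul_cancel₀ _ (hgpos u).ne'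
    nlinarith [h2, h3]
  -- integrate
  have hint : ∫ u, (φ a * g u + s * (f u - a * g u)) ∂μp
      ≤ ∫ u, φ (f u / g u) * g u ∂μp := by
    apply integral_mono _ hhi hpt
    exact (hgi.const_mul (φ a)).add ((hfi.sub (hgi.const_mul a)).const_mul s)
  have i2' : Integrable (fun u => f u - a * g u) μp := hfi.sub (hgi.const_mul a)
  have i1 : Integrable (fun u => φ a * g u) μp := hgi.const_mul (φ a)
  have i2 : Integrable (fun u => s * (f u - a * g u)) μp := i2'.const_mul s
  have hsplit : ∫ u, (φ a * g u + s * (f u - a * g u)) ∂μp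
      = φ a * ∫ u, g u ∂μp + s * ((∫ u, f u ∂μp) - a * ∫ u, g u ∂μp) := by
    have e1 : ∫ u, (φ a * g u + s * (f u - a * g u)) ∂μp
        = (∫ u, φ a * g u ∂μp) + ∫ u, s * (f u - a * g u) ∂μp := integral_add i1 i2
    have e2 : ∫ u, s * (f u - a * g u) ∂μp = s * ∫ u, (f u - a * g u) ∂μp :=
      integral_const_mul _ _
    have e3 : ∫ u, (f u - a * g u) ∂μp = (∫ u, f u ∂μp) - ∫ u, a * g u ∂μp :=
      integral_sub hfi (hgi.const_mul a)
    have e4 : ∫ u, a * g u ∂μp = a * ∫ u, g u ∂μp := integral_const_mul _ _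
    have e5 : ∫ u, φ a * g u ∂μp = φ a * ∫ u, g u ∂μp := integral_const_mul _ _
    rw [e1, e2, e3, e4, e5]
  -- Minkowski consequence : k * ∫ f ≥ a * Cp
  have hIf0 : 0 ≤ ∫ u, f u ∂μp := integral_nonneg fun u => (hfpos u).le
  have hA0 : 0 ≤ k * ∫ u, f u ∂μp := mul_nonneg hk.le hIf0
  have hdne : d ≠ 0 := hd.ne'
  have hMain : a * Cp ≤ k * ∫ u, f u ∂μp := by
    have hB : (0 : ℝ) ≤ Cp ^ (d - 1) * Cp1 :=
      mul_nonneg (Real.rpow_nonneg hCp.le _) hCp1.le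
    have h1 : (Cp ^ (d - 1) * Cp1) ^ (1 / d) ≤ ((k * ∫ u, f u ∂μp) ^ d) ^ (1 / d) :=
      Real.rpow_le_rpow hB hMinkowski (by positivity)
    have h2 : ((k * ∫ u, f u ∂μp) ^ d) ^ (1 / d) = k * ∫ u, f u ∂μp := by
      rw [← Real.rpow_mul hA0, mul_one_div_cancel hdne, Real.rpow_one]
    have h3 : (Cp ^ (d - 1) * Cp1) ^ (1 / d) = a * Cp := by
      rw [Real.mul_rpow (Real.rpow_nonneg hCp.le _) hCp1.le,
        ← Real.rpow_mul hCp.le, hadef, Real.div_rpow hCp1.le hCp.le]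
      have : (d - 1) * (1 / d) = 1 - 1 / d := by field_simp
      rw [this, Real.rpow_sub hCp, Real.rpow_one]
      field_simp
    rw [h2, h3] at h1
    exact h1
  -- finish
  have hIg : k * ∫ u, g u ∂μp = Cp := hPoincare
  have step : k * ∫ u, (φ a * g u + s * (f u - a * g u)) ∂μp
      = φ a * Cp + s * ((k * ∫ u, f u ∂μp) - a * Cp) := by
    rw [hsplit]
    rw [← hIg]
    ring
  have hfinal : φ a * Cp ≤ k * ∫ u, φ (f u / g u) * g u ∂μp := by
    have h1 : k * ∫ u, (φ a * g u + s * (f u - a * g u)) ∂μp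
        ≤ k * ∫ u, φ (f u / g u) * g u ∂μp :=
      mul_le_mul_of_nonneg_left hint hk.le
    have h2 : 0 ≤ s * ((k * ∫ u, f u ∂μp) - a * Cp) :=
      mul_nonneg hs0 (by linarith)
    rw [step] at h1
    linarith
  calc Cp * φ ((Cp1 / Cp) ^ (1 / ((n : ℝ) - p))) = φ a * Cp := by rw [mul_comm]
    _ ≤ k * ∫ u, φ (f u / g u) * g u ∂μp := hfinal
    _ = k * ∫ u, φ (suppFn n Ω₁ ↑u / suppFn n Ω ↑u) * suppFn n Ω ↑u ∂μp := rfl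
end

section
/- Let p ∈ (1,n), q > 1, and let Ω, Ω₁ be bounded convex domains containing the origin. Then the L_q mixed p-capacity satisfies C_{p,q}(Ω, Ω₁) ≥ C_p(Ω)^{(n-p-q)/(n-p)} · C_p(Ω₁)^{q/(n-p)}. -/
open MeasureTheory Set

lemma suppFn_props (n : ℕ) (Ω : Set (EuclideanSpace ℝ (Fin n))) (h : IsConvexDomain n Ω) :
    ∃ ε R : ℝ, 0 < ε ∧ Continuous (suppFn n Ω) ∧
      ∀ u : EuclideanSpace ℝ (Fin n), ‖u‖ = 1 → ε ≤ suppFn n Ω u ∧ suppFn n Ω u ≤ R := by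
  obtain ⟨hopen, -, hbd, h0⟩ := h
  obtain ⟨R, hR⟩ := hbd.exists_norm_le
  obtain ⟨ε, hε, hball⟩ := Metric.isOpen_iff.1 hopen 0 h0
  have hR0 : 0 ≤ R := by simpa using hR 0 h0
  have hbdd : ∀ v : EuclideanSpace ℝ (Fin n),
      BddAbove ((fun x => (inner ℝ x v : ℝ)) '' Ω) := by
    intro v
    refine ⟨R * ‖v‖, ?_⟩
    rintro _ ⟨x, hx, rfl⟩
    calc (inner ℝ x v : ℝ) ≤ ‖x‖ * ‖v‖ := real_inner_le_norm x v
      _ ≤ R * ‖v‖ := by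
        have := hR x hx
        have := norm_nonneg v
        nlinarith
  have hne : ∀ v : EuclideanSpace ℝ (Fin n),
      ((fun x => (inner ℝ x v : ℝ)) '' Ω).Nonempty := fun v => ⟨_, ⟨0, h0, rfl⟩⟩
  have key : ∀ u v : EuclideanSpace ℝ (Fin n),
      suppFn n Ω u ≤ suppFn n Ω v + R * ‖u - v‖ := by
    intro u v
    apply csSup_le (hne u)
    rintro _ ⟨x, hx, rfl⟩
    have h1 : (inner ℝ x u : ℝ) = inner ℝ x v + inner ℝ x (u - v) := by
      rw [inner_sub_right]; ring
    have h2 : (inner ℝ x v : ℝ) ≤ suppFn n Ω v := le_csSup (hbdd v) ⟨x, hx, rfl⟩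
    have h3 : (inner ℝ x (u - v) : ℝ) ≤ ‖x‖ * ‖u - v‖ := real_inner_le_norm _ _
    have h4 : ‖x‖ * ‖u - v‖ ≤ R * ‖u - v‖ :=
      mul_le_mul_of_nonneg_right (hR x hx) (norm_nonneg _)
    linarith
  have hcont : Continuous (suppFn n Ω) := by
    refine (LipschitzWith.of_dist_le_mul (K := R.toNNReal)
      (f := suppFn n Ω) ?_).continuous
    intro u v
    rw [Real.dist_eq, abs_sub_le_iff]
    have hco : (R.toNNReal : ℝ) = R := Real.coe_toNNReal R hR0
    rw [hco]
    constructor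
    · have := key u v
      rw [← dist_eq_norm] at this
      linarith
    · have := key v u
      rw [← dist_eq_norm, dist_comm v u] at this
      linarith
  refine ⟨ε / 2, R, by linarith, hcont, fun u hu => ?_⟩
  constructor
  · have hmem : (ε / 2) • u ∈ Ω := by
      apply hball
      simp only [Metric.mem_ball, dist_zero_right, norm_smul, hu]
      rw [Real.norm_eq_abs, abs_of_pos (by linarith : (0:ℝ) < ε / 2)]
      linarith
    have : (inner ℝ ((ε / 2) • u) u : ℝ) ≤ suppFn n Ω u :=
      le_csSup (hbdd u) ⟨_, hmem, rfl⟩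
    rwa [real_inner_smul_left, real_inner_self_eq_norm_sq, hu, one_pow, mul_one] at this
  · apply csSup_le (hne u)
    rintro _ ⟨x, hx, rfl⟩
    calc (inner ℝ x u : ℝ) ≤ ‖x‖ * ‖u‖ := real_inner_le_norm x u
      _ ≤ R := by rw [hu, mul_one]; exact hR x hx


/-- the `L_q` `p`-capacitary Minkowski inequality
`C_{p,q}(Ω,Ω₁) ≥ C_p(Ω)^{(n-p-q)/(n-p)} C_p(Ω₁)^{q/(n-p)}` for `q > 1`, where
`C_{p,q}(Ω,Ω₁) = (p−1)/(n−p) ∫ h_{Ω₁}^q h_Ω^{1−q} dμ_p(Ω,·)`, with `μp` the `p`-capacitary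
measure of `Ω`, and `Cp`, `Cp1` the `p`-capacities linked by the Poincaré formula and the
`p`-capacitary Minkowski inequality. -/
theorem Lq_minkowski_capacity (n : ℕ) (p q : ℝ) (hp : 1 < p) (hpn : p < n) (hq : 1 < q)
    (Ω Ω₁ : Set (EuclideanSpace ℝ (Fin n)))
    (hΩ : IsConvexDomain n Ω) (hΩ₁ : IsConvexDomain n Ω₁)
    (μp : Measure (Metric.sphere (0 : EuclideanSpace ℝ (Fin n)) 1)) [IsFiniteMeasure μp]
    (Cp Cp1 : ℝ) (hCp : 0 < Cp) (hCp1 : 0 < Cp1)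
    (hPoincare : (p - 1) / ((n : ℝ) - p) * ∫ u, suppFn n Ω ↑u ∂μp = Cp)
    (hMinkowski : ((p - 1) / ((n : ℝ) - p) * ∫ u, suppFn n Ω₁ ↑u ∂μp) ^ ((n : ℝ) - p)
      ≥ Cp ^ ((n : ℝ) - p - 1) * Cp1) :
    (p - 1) / ((n : ℝ) - p) *
        ∫ u, (suppFn n Ω₁ ↑u) ^ q * (suppFn n Ω ↑u) ^ (1 - q) ∂μp
      ≥ Cp ^ (((n : ℝ) - p - q) / ((n : ℝ) - p)) * Cp1 ^ (q / ((n : ℝ) - p)) := by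
  obtain ⟨ε, R, hε, hcont, hbound⟩ := suppFn_props n Ω hΩ
  obtain ⟨ε₁, R₁, hε₁, hcont₁, hbound₁⟩ := suppFn_props n Ω₁ hΩ₁
  have hnp : (0:ℝ) < (n : ℝ) - p := by linarith
  have hnp' : ((n:ℝ) - p) ≠ 0 := ne_of_gt hnp
  set c : ℝ := (p - 1) / ((n : ℝ) - p) with hc_def
  have hc : 0 < c := div_pos (by linarith) hnp
  have hq0 : q ≠ 0 := by positivity
  have hq1 : q - 1 ≠ 0 := by intro h; linarith [sub_eq_zero.1 h]
  set q' : ℝ := q / (q - 1) with hq'_def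
  have hq'pos : 0 < q' := div_pos (by linarith) (by linarith)
  have hpq : q.HolderConjugate q' := Real.HolderConjugate.conjExponent hq
  -- pointwise facts on the sphere
  have hsph : ∀ u : Metric.sphere (0 : EuclideanSpace ℝ (Fin n)) 1,
      ‖(u : EuclideanSpace ℝ (Fin n))‖ = 1 := fun u => by
    simpa using mem_sphere_zero_iff_norm.1 u.2
  have hfε : ∀ u : Metric.sphere (0 : EuclideanSpace ℝ (Fin n)) 1,
      ε ≤ suppFn n Ω ↑u := fun u => (hbound _ (hsph u)).1
  have hfR : ∀ u : Metric.sphere (0 : EuclideanSpace ℝ (Fin n)) 1,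
      suppFn n Ω ↑u ≤ R := fun u => (hbound _ (hsph u)).2
  have hgε : ∀ u : Metric.sphere (0 : EuclideanSpace ℝ (Fin n)) 1,
      ε₁ ≤ suppFn n Ω₁ ↑u := fun u => (hbound₁ _ (hsph u)).1
  have hgR : ∀ u : Metric.sphere (0 : EuclideanSpace ℝ (Fin n)) 1,
      suppFn n Ω₁ ↑u ≤ R₁ := fun u => (hbound₁ _ (hsph u)).2
  have hf_pos : ∀ u : Metric.sphere (0 : EuclideanSpace ℝ (Fin n)) 1,
      0 < suppFn n Ω ↑u := fun u => lt_of_lt_of_le hε (hfε u)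
  have hg_pos : ∀ u : Metric.sphere (0 : EuclideanSpace ℝ (Fin n)) 1,
      0 < suppFn n Ω₁ ↑u := fun u => lt_of_lt_of_le hε₁ (hgε u)
  -- the three auxiliary functions for Hölder
  set Φ : Metric.sphere (0 : EuclideanSpace ℝ (Fin n)) 1 → ℝ :=
    fun u => (suppFn n Ω₁ ↑u) ^ q * (suppFn n Ω ↑u) ^ (1 - q) with hΦ_def
  set A : Metric.sphere (0 : EuclideanSpace ℝ (Fin n)) 1 → ℝ :=
    fun u => Φ u ^ (1 / q) with hA_def
  set B : Metric.sphere (0 : EuclideanSpace ℝ (Fin n)) 1 → ℝ :=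
    fun u => (suppFn n Ω ↑u) ^ (1 / q') with hB_def
  have hΦ0 : ∀ u, 0 ≤ Φ u := fun u =>
    mul_nonneg (Real.rpow_nonneg (hg_pos u).le _) (Real.rpow_nonneg (hf_pos u).le _)
  have hA0 : ∀ u, 0 ≤ A u := fun u => Real.rpow_nonneg (hΦ0 u) _
  have hB0 : ∀ u, 0 ≤ B u := fun u => Real.rpow_nonneg (hf_pos u).le _
  -- continuity and boundedness, hence Memℒp
  have hfc : Continuous fun u : Metric.sphere (0 : EuclideanSpace ℝ (Fin n)) 1 =>
      suppFn n Ω ↑u := hcont.comp continuous_subtype_val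
  have hgc : Continuous fun u : Metric.sphere (0 : EuclideanSpace ℝ (Fin n)) 1 =>
      suppFn n Ω₁ ↑u := hcont₁.comp continuous_subtype_val
  have hΦc : Continuous Φ := by
    refine Continuous.mul ?_ ?_
    · exact hgc.rpow_const fun u => Or.inr (by positivity)
    · exact hfc.rpow_const fun u => Or.inl (ne_of_gt (hf_pos u))
  have hAc : Continuous A := hΦc.rpow_const fun u => Or.inr (by positivity)
  have hBc : Continuous B := hfc.rpow_const fun u => Or.inr (by positivity)
  have hAmem : MemLp A (ENNReal.ofReal q) μp := by
    refine MemLp.of_bound hAc.aestronglyMeasurable ((R₁ ^ q * ε ^ (1 - q)) ^ (1 / q))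
      (ae_of_all _ fun u => ?_)
    rw [Real.norm_of_nonneg (hA0 u)]
    refine Real.rpow_le_rpow (hΦ0 u) ?_ (by positivity)
    refine mul_le_mul (Real.rpow_le_rpow (hg_pos u).le (hgR u) (by positivity))
      (Real.rpow_le_rpow_of_nonpos hε (hfε u) (by linarith))
      (Real.rpow_nonneg (hf_pos u).le _) (Real.rpow_nonneg ?_ _)
    exact le_trans (hg_pos u).le (hgR u)
  have hBmem : MemLp B (ENNReal.ofReal q') μp := by
    refine MemLp.of_bound hBc.aestronglyMeasurable (R ^ (1 / q'))
      (ae_of_all _ fun u => ?_)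
    rw [Real.norm_of_nonneg (hB0 u)]
    exact Real.rpow_le_rpow (hf_pos u).le (hfR u) (by positivity)
  -- Hölder's inequality
  have holder := MeasureTheory.integral_mul_le_Lp_mul_Lq_of_nonneg hpq
    (ae_of_all _ hA0) (ae_of_all _ hB0) hAmem hBmem
  -- pointwise simplifications
  have hAB : ∀ u, A u * B u = suppFn n Ω₁ ↑u := by
    intro u
    have h1 : A u = suppFn n Ω₁ ↑u * (suppFn n Ω ↑u) ^ ((1 - q) * (1 / q)) := by
      simp only [hA_def, hΦ_def]
      rw [Real.mul_rpow (Real.rpow_nonneg (hg_pos u).le _) (Real.rpow_nonneg (hf_pos u).le _),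
        ← Real.rpow_mul (hg_pos u).le, ← Real.rpow_mul (hf_pos u).le,
        mul_one_div_cancel hq0, Real.rpow_one]
    have h2 : (1 : ℝ) / q' = (q - 1) / q := by rw [hq'_def, one_div_div]
    simp only [hB_def]
    rw [h1, h2, mul_assoc, ← Real.rpow_add (hf_pos u)]
    have h3 : (1 - q) * (1 / q) + (q - 1) / q = 0 := by field_simp; ring
    rw [h3, Real.rpow_zero, mul_one]
  have hAq : ∀ u, A u ^ q = Φ u := by
    intro u
    simp only [hA_def]
    rw [← Real.rpow_mul (hΦ0 u), one_div_mul_cancel hq0, Real.rpow_one]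
  have hBq : ∀ u, B u ^ q' = suppFn n Ω ↑u := by
    intro u
    simp only [hB_def]
    rw [← Real.rpow_mul (hf_pos u).le, one_div_mul_cancel (ne_of_gt hq'pos),
      Real.rpow_one]
  rw [MeasureTheory.integral_congr_ae (Filter.Eventually.of_forall hAB),
    MeasureTheory.integral_congr_ae (Filter.Eventually.of_forall hAq),
    MeasureTheory.integral_congr_ae (Filter.Eventually.of_forall hBq)] at holder
  -- names for the integrals
  set Iv : ℝ := ∫ u, suppFn n Ω₁ ↑u ∂μp with hIv_def
  set J : ℝ := ∫ u, Φ u ∂μp with hJ_def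
  set K0 : ℝ := ∫ u, suppFn n Ω ↑u ∂μp with hK0_def
  have hI0 : 0 ≤ Iv := integral_nonneg fun u => (hg_pos u).le
  have hJ0 : 0 ≤ J := integral_nonneg hΦ0
  have hK0pos : 0 < K0 := by nlinarith [hPoincare, hCp, hc]
  -- step 1: Iv^q ≤ J * K0^(q-1)
  have step1 : Iv ^ q ≤ J * K0 ^ (q - 1) := by
    have h1 : Iv ^ q ≤ (J ^ (1 / q) * K0 ^ (1 / q')) ^ q :=
      Real.rpow_le_rpow hI0 holder (by positivity)
    rwa [Real.mul_rpow (Real.rpow_nonneg hJ0 _) (Real.rpow_nonneg hK0pos.le _),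
      ← Real.rpow_mul hJ0, ← Real.rpow_mul hK0pos.le, one_div_mul_cancel hq0,
      Real.rpow_one, show 1 / q' * q = q - 1 by rw [hq'_def]; field_simp] at h1
  have hJ1 : Iv ^ q * K0 ^ (1 - q) ≤ J := by
    rw [show (1 : ℝ) - q = -(q - 1) by ring, Real.rpow_neg hK0pos.le, ← div_eq_mul_inv,
      div_le_iff₀ (Real.rpow_pos_of_pos hK0pos _)]
    exact step1
  -- positivity of c * Iv
  have hcI : 0 < c * Iv := by
    rcases eq_or_lt_of_le (mul_nonneg hc.le hI0) with h | h
    · exfalso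
      have h0 : ((c * Iv) : ℝ) ^ ((n:ℝ) - p) = 0 := by
        rw [← h, Real.zero_rpow hnp']
      have hpos : 0 < Cp ^ ((n:ℝ) - p - 1) * Cp1 :=
        mul_pos (Real.rpow_pos_of_pos hCp _) hCp1
      have := hMinkowski
      rw [h0] at this
      linarith
    · exact h
  -- step 3: c * Iv ≥ D
  have hDpos : 0 < Cp ^ ((n:ℝ) - p - 1) * Cp1 :=
    mul_pos (Real.rpow_pos_of_pos hCp _) hCp1
  have hD : (Cp ^ ((n:ℝ) - p - 1) * Cp1) ^ (1 / ((n:ℝ) - p)) ≤ c * Iv := by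
    have h1 := Real.rpow_le_rpow hDpos.le hMinkowski (by positivity : (0:ℝ) ≤ 1 / ((n:ℝ) - p))
    rwa [← Real.rpow_mul hcI.le, mul_one_div_cancel hnp', Real.rpow_one] at h1
  -- factorization
  have hfac : (c * Iv) ^ q * (c * K0) ^ (1 - q) = c * (Iv ^ q * K0 ^ (1 - q)) := by
    rw [Real.mul_rpow hc.le hI0, Real.mul_rpow hc.le hK0pos.le]
    have h1 : c ^ q * c ^ (1 - q) = c := by
      rw [← Real.rpow_add hc]; norm_num
    calc c ^ q * Iv ^ q * (c ^ (1 - q) * K0 ^ (1 - q))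
        = c ^ q * c ^ (1 - q) * (Iv ^ q * K0 ^ (1 - q)) := by ring
      _ = c * (Iv ^ q * K0 ^ (1 - q)) := by rw [h1]
  -- final exponent computation
  have hfinal : ((Cp ^ ((n:ℝ) - p - 1) * Cp1) ^ (1 / ((n:ℝ) - p))) ^ q * Cp ^ (1 - q)
      = Cp ^ (((n:ℝ) - p - q) / ((n:ℝ) - p)) * Cp1 ^ (q / ((n:ℝ) - p)) := by
    rw [← Real.rpow_mul hDpos.le, one_div_mul_eq_div,
      Real.mul_rpow (Real.rpow_nonneg hCp.le _) hCp1.le, ← Real.rpow_mul hCp.le,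
      mul_right_comm, ← Real.rpow_add hCp]
    congr 1
    field_simp
    ring
  rw [ge_iff_le]
  calc Cp ^ (((n:ℝ) - p - q) / ((n:ℝ) - p)) * Cp1 ^ (q / ((n:ℝ) - p))
      = ((Cp ^ ((n:ℝ) - p - 1) * Cp1) ^ (1 / ((n:ℝ) - p))) ^ q * Cp ^ (1 - q) := hfinal.symm
    _ ≤ (c * Iv) ^ q * Cp ^ (1 - q) :=
        mul_le_mul_of_nonneg_right
          (Real.rpow_le_rpow (Real.rpow_nonneg hDpos.le _) hD (by positivity))
          (Real.rpow_nonneg hCp.le _)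
    _ = c * (Iv ^ q * K0 ^ (1 - q)) := by rw [← hPoincare]; exact hfac
    _ ≤ c * J := mul_le_mul_of_nonneg_left hJ1 hc.le
end

section
/- Let m ≥ 2, φ ∈ Φ_m (convex, increasing in each variable, φ(0)=0, φ(e_j)=1 for each j), p ∈ (1,n), and Ω₁,…,Ω_m bounded convex domains containing the origin. Let K = +_φ(Ω₁,…,Ω_m) be the Orlicz sum, defined via its support function by φ(h_{Ω₁}(u)/h_K(u), …, h_{Ω_m}(u)/h_K(u)) = 1 for all u ∈ S^{n-1}. Then φ((C_p(Ω₁)/C_p(K))^{1/(n-p)}, …, (C_p(Ω_m)/C_p(K))^{1/(n-p)}) ≤ 1. -/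
open MeasureTheory Set
open scoped ENNReal NNReal

section Aux

variable {n : ℕ} {K : Set (EuclideanSpace ℝ (Fin n))}

lemma suppFn_bddAbove (hb : Bornology.IsBounded K) (u : EuclideanSpace ℝ (Fin n)) :
    BddAbove ((fun x => (inner ℝ x u : ℝ)) '' K) := by
  obtain ⟨R, hR⟩ := hb.exists_norm_le
  refine ⟨R * ‖u‖, ?_⟩
  rintro y ⟨x, hx, rfl⟩
  calc (inner ℝ x u : ℝ) ≤ ‖x‖ * ‖u‖ := real_inner_le_norm x u
    _ ≤ R * ‖u‖ := by
        have := hR x hx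
        have : (0:ℝ) ≤ ‖u‖ := norm_nonneg u
        nlinarith [hR x hx, norm_nonneg x]

lemma suppFn_nonneg_s11 (hb : Bornology.IsBounded K) (h0 : (0 : EuclideanSpace ℝ (Fin n)) ∈ K)
    (u : EuclideanSpace ℝ (Fin n)) : 0 ≤ suppFn n K u := by
  refine le_csSup (suppFn_bddAbove hb u) ⟨0, h0, ?_⟩
  simp

lemma suppFn_mono {Ω : Set (EuclideanSpace ℝ (Fin n))} (hΩK : Ω ⊆ K)
    (hb : Bornology.IsBounded K) (hne : Ω.Nonempty) (u : EuclideanSpace ℝ (Fin n)) :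
    suppFn n Ω u ≤ suppFn n K u :=
  csSup_le_csSup (suppFn_bddAbove hb u) (hne.image _) (Set.image_mono hΩK)

lemma suppFn_pos_s11 (hb : Bornology.IsBounded K) (hop : IsOpen K)
    (h0 : (0 : EuclideanSpace ℝ (Fin n)) ∈ K) (u : EuclideanSpace ℝ (Fin n))
    (hu : ‖u‖ = 1) : 0 < suppFn n K u := by
  obtain ⟨ε, hε, hball⟩ := Metric.isOpen_iff.1 hop 0 h0
  have hmem : (ε/2) • u ∈ K := by
    apply hball
    simp only [Metric.mem_ball, dist_zero_right, norm_smul, hu, mul_one]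
    rw [Real.norm_eq_abs, abs_of_pos (by linarith)]
    linarith
  have : (ε/2 : ℝ) ≤ suppFn n K u := by
    refine le_csSup (suppFn_bddAbove hb u) ⟨(ε/2) • u, hmem, ?_⟩
    show (inner ℝ ((ε/2) • u) u : ℝ) = ε/2
    rw [real_inner_smul_left, real_inner_self_eq_norm_sq, hu]
    ring
  linarith

lemma suppFn_continuous_s11 (hb : Bornology.IsBounded K)
    (hne : K.Nonempty) : Continuous (suppFn n K) := by
  obtain ⟨R, hR⟩ := hb.exists_norm_le
  have hR0 : 0 ≤ R := le_trans (norm_nonneg _) (hR hne.choose hne.choose_spec)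
  have key : ∀ u v : EuclideanSpace ℝ (Fin n),
      suppFn n K u ≤ suppFn n K v + R * dist u v := by
    intro u v
    refine csSup_le (hne.image _) ?_
    rintro y ⟨x, hx, rfl⟩
    have h1 : (inner ℝ x v : ℝ) ≤ suppFn n K v :=
      le_csSup (suppFn_bddAbove hb v) ⟨x, hx, rfl⟩
    have h2 : (inner ℝ x (u - v) : ℝ) ≤ ‖x‖ * ‖u - v‖ := real_inner_le_norm _ _
    have h3 : ‖x‖ * ‖u - v‖ ≤ R * dist u v := by
      rw [dist_eq_norm]
      exact mul_le_mul_of_nonneg_right (hR x hx) (norm_nonneg _)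
    have : (inner ℝ x u : ℝ) = inner ℝ x v + inner ℝ x (u - v) := by
      rw [inner_sub_right]; ring
    linarith
  have : LipschitzWith (Real.toNNReal R) (suppFn n K) := by
    refine LipschitzWith.of_dist_le_mul fun u v => ?_
    rw [Real.dist_eq, abs_sub_le_iff]
    constructor
    · have := key u v
      have hco : (Real.toNNReal R : ℝ) = R := Real.coe_toNNReal R hR0
      rw [hco]; linarith
    · have := key v u
      have hco : (Real.toNNReal R : ℝ) = R := Real.coe_toNNReal R hR0
      rw [hco, dist_comm u v]; linarith
  exact this.continuous

end Aux

/-- the `p`-capacitary Orlicz–Brunn–Minkowski inequality.  If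
`K = +_φ(Ω₁,…,Ω_m)` is the Orlicz sum, defined by
`φ(h_{Ω₁}/h_K, …, h_{Ω_m}/h_K) = 1` on `S^{n-1}`, for `φ ∈ Φ_m`, then
`φ((C_p(Ω₁)/C_p(K))^{1/(n-p)}, …, (C_p(Ω_m)/C_p(K))^{1/(n-p)}) ≤ 1`.  The `p`-capacities
`CpK, Cp j` are linked to the `p`-capacitary measure `μp` of `K` by monotonicity, the
Poincaré formula, and the `p`-capacitary Minkowski inequality. -/
theorem orlicz_brunn_minkowski_capacity (n m : ℕ) (hm : 2 ≤ m) (p : ℝ)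
    (hp : 1 < p) (hpn : p < n)
    (φ : (Fin m → ℝ) → ℝ)
    (hφconv : ConvexOn ℝ {x : Fin m → ℝ | ∀ i, 0 ≤ x i} φ)
    (hφmono : Monotone φ) (hφ0 : φ 0 = 0)
    (hφe : ∀ j : Fin m, φ (Pi.single j 1) = 1)
    (Ω : Fin m → Set (EuclideanSpace ℝ (Fin n))) (hΩ : ∀ j, IsConvexDomain n (Ω j))
    (K : Set (EuclideanSpace ℝ (Fin n))) (hK : IsConvexDomain n K)
    (hsub : ∀ j, Ω j ⊆ K)
    (hKdef : ∀ u : Metric.sphere (0 : EuclideanSpace ℝ (Fin n)) 1,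
      φ (fun j => suppFn n (Ω j) ↑u / suppFn n K ↑u) = 1)
    (μp : Measure (Metric.sphere (0 : EuclideanSpace ℝ (Fin n)) 1)) [IsFiniteMeasure μp]
    (CpK : ℝ) (Cp : Fin m → ℝ) (hCpK : 0 < CpK) (hCp : ∀ j, 0 < Cp j)
    (hCple : ∀ j, Cp j ≤ CpK)
    (hPoincare : (p - 1) / ((n : ℝ) - p) * ∫ u, suppFn n K ↑u ∂μp = CpK)
    (hMinkowski : ∀ j, (p - 1) / ((n : ℝ) - p) * ∫ u, suppFn n (Ω j) ↑u ∂μp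
      ≥ CpK ^ (((n : ℝ) - p - 1) / ((n : ℝ) - p)) * (Cp j) ^ (1 / ((n : ℝ) - p))) :
    φ (fun j => (Cp j / CpK) ^ (1 / ((n : ℝ) - p))) ≤ 1 := by
  classical
  have hnp : (0:ℝ) < (n:ℝ) - p := by linarith
  have hp1 : (0:ℝ) < p - 1 := by linarith
  -- basic geometry facts
  obtain ⟨hKop, hKconv, hKbdd, hK0⟩ := hK
  have hKne : K.Nonempty := ⟨0, hK0⟩
  have hnorm : ∀ u : Metric.sphere (0 : EuclideanSpace ℝ (Fin n)) 1,
      ‖(u : EuclideanSpace ℝ (Fin n))‖ = 1 := by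
    intro u
    have := u.2
    simpa [Metric.mem_sphere, dist_zero_right] using this
  set hk : Metric.sphere (0 : EuclideanSpace ℝ (Fin n)) 1 → ℝ :=
    fun u => suppFn n K ↑u with hhk
  set g : Fin m → Metric.sphere (0 : EuclideanSpace ℝ (Fin n)) 1 → ℝ :=
    fun j u => suppFn n (Ω j) ↑u with hg
  have hPo : (p - 1) / ((n : ℝ) - p) * ∫ u, hk u ∂μp = CpK := hPoincare
  have hM' : ∀ j, (p - 1) / ((n : ℝ) - p) * ∫ u, g j u ∂μp
      ≥ CpK ^ (((n : ℝ) - p - 1) / ((n : ℝ) - p)) * (Cp j) ^ (1 / ((n : ℝ) - p)) :=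
    hMinkowski
  have hkpos : ∀ u, 0 < hk u := fun u =>
    suppFn_pos_s11 hKbdd hKop hK0 _ (hnorm u)
  have hkcont : Continuous hk :=
    (suppFn_continuous_s11 hKbdd hKne).comp continuous_subtype_val
  have hgcont : ∀ j, Continuous (g j) := fun j =>
    (suppFn_continuous_s11 ((hΩ j).2.2.1) ⟨0, (hΩ j).2.2.2⟩).comp continuous_subtype_val
  have hgnonneg : ∀ j, ∀ u, 0 ≤ g j u := fun j u =>
    suppFn_nonneg_s11 ((hΩ j).2.2.1) ((hΩ j).2.2.2) _
  -- the normalized density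
  set c : ℝ := (p - 1) / (((n:ℝ) - p) * CpK) with hc
  have hcpos : 0 < c := div_pos hp1 (mul_pos hnp hCpK)
  -- integrability over μp
  haveI : IsFiniteMeasureOnCompacts μp := ⟨fun _ _ => measure_lt_top μp _⟩
  have hint_hk : Integrable hk μp :=
    hkcont.integrable_of_hasCompactSupport (HasCompactSupport.of_compactSpace _)
  have hint_g : ∀ j, Integrable (g j) μp := fun j =>
    (hgcont j).integrable_of_hasCompactSupport (HasCompactSupport.of_compactSpace _)
  have hint_chk : Integrable (fun u => c * hk u) μp := hint_hk.const_mul c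
  have hintval : ∫ u, c * hk u ∂μp = 1 := by
    rw [integral_const_mul]
    have hI := hPo
    have h2 : ((n:ℝ) - p) ≠ 0 := ne_of_gt hnp
    have h3 : CpK ≠ 0 := hCpK.ne'
    have h4 : (p:ℝ) - 1 ≠ 0 := ne_of_gt hp1
    rw [hc]
    field_simp at hI ⊢
    linear_combination hI
  -- the probability measure ν
  set d : Metric.sphere (0 : EuclideanSpace ℝ (Fin n)) 1 → ℝ≥0 := fun u => (c * hk u).toNNReal with hd
  have hdmeas : Measurable d :=
    ((continuous_const.mul hkcont).measurable).real_toNNReal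
  set ν : Measure (Metric.sphere (0 : EuclideanSpace ℝ (Fin n)) 1) := μp.withDensity (fun u => (d u : ℝ≥0∞)) with hν
  have hdnn : ∀ u, (0:ℝ) ≤ c * hk u := fun u =>
    mul_nonneg hcpos.le (hkpos u).le
  have hνprob : IsProbabilityMeasure ν := by
    constructor
    rw [hν, withDensity_apply _ MeasurableSet.univ, setLIntegral_univ]
    have : ∀ u, ((d u : ℝ≥0) : ℝ≥0∞) = ENNReal.ofReal (c * hk u) := fun u => rfl
    simp_rw [this]
    rw [← ofReal_integral_eq_lintegral_ofReal hint_chk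
      (Filter.Eventually.of_forall hdnn), hintval, ENNReal.ofReal_one]
  haveI := hνprob
  haveI : IsFiniteMeasureOnCompacts ν := ⟨fun _ _ => measure_lt_top ν _⟩
  -- the vector-valued function f
  set f : Metric.sphere (0 : EuclideanSpace ℝ (Fin n)) 1 → (Fin m → ℝ) := fun u j => g j u / hk u with hf
  have hfcont : Continuous f :=
    continuous_pi fun j => (hgcont j).div hkcont (fun u => (hkpos u).ne')
  have hfint : Integrable f ν :=
    hfcont.integrable_of_hasCompactSupport (HasCompactSupport.of_compactSpace _)
  have hfnn : ∀ u, ∀ j, 0 ≤ f u j := fun u j =>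
    div_nonneg (hgnonneg j u) (hkpos u).le
  -- the extension ψ of φ, convex on all of ℝ^m
  set ψ : (Fin m → ℝ) → ℝ := fun x => φ (fun i => max (x i) 0) with hψ
  have hψconv : ConvexOn ℝ Set.univ ψ := by
    refine ⟨convex_univ, ?_⟩
    intro x _ y _ a b ha hb hab
    have step1 : ψ (a • x + b • y) ≤ φ (a • (fun i => max (x i) 0) + b • (fun i => max (y i) 0)) := by
      apply hφmono
      intro i
      simp only [Pi.add_apply, Pi.smul_apply, smul_eq_mul]
      refine max_le (add_le_add (mul_le_mul_of_nonneg_left (le_max_left _ _) ha)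
        (mul_le_mul_of_nonneg_left (le_max_left _ _) hb)) ?_
      have h1 : 0 ≤ a * max (x i) 0 := mul_nonneg ha (le_max_right _ _)
      have h2 : 0 ≤ b * max (y i) 0 := mul_nonneg hb (le_max_right _ _)
      linarith
    have step2 : φ (a • (fun i => max (x i) 0) + b • (fun i => max (y i) 0))
        ≤ a * φ (fun i => max (x i) 0) + b * φ (fun i => max (y i) 0) := by
      have := hφconv.2 (x := fun i => max (x i) 0) (y := fun i => max (y i) 0)
        (fun i => le_max_right _ _) (fun i => le_max_right _ _) ha hb hab
      simpa using this
    calc ψ (a • x + b • y) ≤ _ := step1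
      _ ≤ a * φ (fun i => max (x i) 0) + b * φ (fun i => max (y i) 0) := step2
      _ = a • ψ x + b • ψ y := by simp [hψ]
  have hψcont : Continuous ψ := by
    have := hψconv.continuousOn isOpen_univ
    rwa [continuousOn_univ] at this
  have hψeq : ∀ x : Fin m → ℝ, (∀ i, 0 ≤ x i) → ψ x = φ x := by
    intro x hx
    simp only [hψ]
    congr 1
    funext i
    exact max_eq_left (hx i)
  have hψmono : Monotone ψ := by
    intro x y hxy
    exact hφmono fun i => max_le_max (hxy i) le_rfl
  -- ψ ∘ f is constantly 1
  have hψf : ∀ u, ψ (f u) = 1 := by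
    intro u
    rw [hψeq _ (hfnn u)]
    exact hKdef u
  -- Jensen's inequality
  have hψfint : Integrable (fun u => ψ (f u)) ν := by
    simp only [hψf]
    exact integrable_const 1
  have hJensen : ψ (∫ u, f u ∂ν) ≤ ∫ u, ψ (f u) ∂ν := by
    refine hψconv.map_integral_le hψcont.continuousOn isClosed_univ ?_ hfint ?_
    · exact Filter.Eventually.of_forall fun u => Set.mem_univ _
    · exact hψfint
  have hRHS : ∫ u, ψ (f u) ∂ν = 1 := by
    simp only [hψf]
    simp
  -- compute the components of ∫ f dν
  have hcomp : ∀ j, (∫ u, f u ∂ν) j = c * ∫ u, g j u ∂μp := by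
    intro j
    have hproj := (ContinuousLinearMap.proj j : (Fin m → ℝ) →L[ℝ] ℝ).integral_comp_comm hfint
    have h1 : (∫ u, f u ∂ν) j = ∫ u, f u j ∂ν := by
      simpa using hproj.symm
    rw [h1, hν, integral_withDensity_eq_integral_smul hdmeas]
    have h2 : ∀ u, d u • f u j = c * g j u := by
      intro u
      have hco : (d u : ℝ) = c * hk u := Real.coe_toNNReal _ (hdnn u)
      have hfj : f u j = g j u / hk u := rfl
      have hkne : hk u ≠ 0 := (hkpos u).ne'
      rw [NNReal.smul_def, smul_eq_mul, hco, hfj]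
      field_simp
      try ring
    simp_rw [h2]
    rw [integral_const_mul]
  -- the Minkowski lower bound on each component
  have hlow : ∀ j, (Cp j / CpK) ^ (1 / ((n : ℝ) - p)) ≤ (∫ u, f u ∂ν) j := by
    intro j
    rw [hcomp j]
    have hM := hM' j
    have hCpj := hCp j
    set α : ℝ := 1 / ((n:ℝ) - p) with hα
    have hsum : ((n:ℝ) - p - 1) / ((n:ℝ) - p) + α = 1 := by
      rw [hα, ← add_div, show (n:ℝ) - p - 1 + 1 = (n:ℝ) - p by ring]
      exact div_self (ne_of_gt hnp)
    have hkey : (Cp j / CpK) ^ α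
        = CpK ^ (((n:ℝ) - p - 1) / ((n:ℝ) - p)) * (Cp j) ^ α / CpK := by
      rw [Real.div_rpow hCpj.le hCpK.le]
      rw [eq_div_iff hCpK.ne']
      rw [div_mul_eq_mul_div, div_eq_iff (ne_of_gt (Real.rpow_pos_of_pos hCpK α))]
      rw [mul_comm (CpK ^ (((n:ℝ) - p - 1) / ((n:ℝ) - p))) ((Cp j) ^ α), mul_assoc,
        ← Real.rpow_add hCpK, hsum, Real.rpow_one]
    rw [hkey]
    rw [div_le_iff₀ hCpK]
    have : c * (∫ u, g j u ∂μp) * CpK = (p - 1) / ((n:ℝ) - p) * ∫ u, g j u ∂μp := by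
      rw [hc]
      have h2 : ((n:ℝ) - p) ≠ 0 := ne_of_gt hnp
      have h3 : CpK ≠ 0 := hCpK.ne'
      field_simp
      try ring
    rw [this]
    exact hM
  -- conclude
  have hy : φ (fun j => (Cp j / CpK) ^ (1 / ((n : ℝ) - p)))
      = ψ (fun j => (Cp j / CpK) ^ (1 / ((n : ℝ) - p))) := by
    rw [hψeq]
    intro i
    exact Real.rpow_nonneg (div_nonneg (hCp i).le hCpK.le) _
  rw [hy]
  calc ψ (fun j => (Cp j / CpK) ^ (1 / ((n : ℝ) - p)))
      ≤ ψ (∫ u, f u ∂ν) := hψmono fun j => hlow j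
    _ ≤ ∫ u, ψ (f u) ∂ν := hJensen
    _ = 1 := hRHS
end
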